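/- Let H be a locally finite graph and let {f_n} be a sequence of non-negative integers. If H has the {f_n}-containment property and G is a subgraph of H, then G has the {f_n}-containment property. -/

import Mathlib

open SimpleGraph

namespace Firefighter

variable {V : Type*}

/-- The set of vertices on fire at time `n`, starting from initial fire `X0`, with fire spreading
along paths of length at most `r` avoiding the protected sets `W 1, ..., W n`. -/
def fireSet (G : SimpleGraph V) (r : ℕ) (X0 : Set V) (W : ℕ → Set V) : ℕ → Set V
  | 0 => X0
  | n + 1 => {v | ∃ u ∈ fireSet G r X0 W n, ∃ p : G.Walk u v, p.length ≤ r ∧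
      ∀ w ∈ p.support, ∀ i, 1 ≤ i → i ≤ n + 1 → w ∉ W i}

/-- `W` is an `(f, r)`-containment strategy for the initial fire `X0` in `G`. -/
def IsContainmentStrategy (G : SimpleGraph V) (r : ℕ) (f : ℕ → ℕ)
    (X0 : Set V) (W : ℕ → Set V) : Prop :=
  (∀ n, 1 ≤ n → (W n).Finite ∧ (W n).ncard ≤ f n) ∧
  (∀ n, Disjoint (fireSet G r X0 W n) (W (n + 1))) ∧
  (∃ N, 0 < N ∧ ∀ n, N ≤ n → fireSet G r X0 W n = fireSet G r X0 W N)

/-- `G` has the `(f, r)`-containment property. -/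
def HasContainmentProperty (G : SimpleGraph V) (r : ℕ) (f : ℕ → ℕ) : Prop :=
  ∀ X0 : Set V, X0.Finite → ∃ W : ℕ → Set V, IsContainmentStrategy G r f X0 W

/-- A graph is locally finite if every vertex has finitely many neighbors. -/
def LocallyFiniteGraph (G : SimpleGraph V) : Prop := ∀ v, (G.neighborSet v).Finite

/-- The ball of radius `n` about the vertex `g0` (in the combinatorial metric). -/
def ball (G : SimpleGraph V) (g0 : V) (n : ℕ) : Set V :=
  {v | G.Reachable g0 v ∧ G.dist g0 v ≤ n}

/-- The sphere of radius `n` about the vertex `g0` (in the combinatorial metric). -/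
def sphere (G : SimpleGraph V) (g0 : V) (n : ℕ) : Set V :=
  {v | G.Reachable g0 v ∧ G.dist g0 v = n}

/-- For `T` a subset of the sphere of radius `n`, `nextAdj G g0 n T` is the set `T*` of vertices
of the sphere of radius `n+1` adjacent to at least one vertex of `T`. -/
def nextAdj (G : SimpleGraph V) (g0 : V) (n : ℕ) (T : Set V) : Set V :=
  {v ∈ sphere G g0 (n + 1) | ∃ u ∈ T, G.Adj u v}

/-- A graph has bounded degree if there is a uniform finite bound on vertex degrees. -/
def BoundedDegree (G : SimpleGraph V) : Prop :=
  ∃ D : ℕ, ∀ v, (G.neighborSet v).Finite ∧ (G.neighborSet v).ncard ≤ D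

/-- Two graphs are quasi-isometric. -/
def QuasiIsometric {V' : Type*} (G : SimpleGraph V) (H : SimpleGraph V') : Prop :=
  ∃ c : ℕ, 1 ≤ c ∧ ∃ (φ : V → V') (ψ : V' → V),
    (∀ g1 g2, H.dist (φ g1) (φ g2) ≤ c * G.dist g1 g2 + c) ∧
    (∀ h1 h2, G.dist (ψ h1) (ψ h2) ≤ c * H.dist h1 h2 + c) ∧
    (∀ g, G.dist g (ψ (φ g)) ≤ c) ∧
    (∀ h, H.dist h (φ (ψ h)) ≤ c)

/-- `f ≼ g` : there is `c > 0` with `f n ≤ c * g (c*n + c) + c` for all `n ≥ c`. -/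
def Preceq (f g : ℕ → ℕ) : Prop :=
  ∃ c : ℕ, 0 < c ∧ ∀ n, c ≤ n → f n ≤ c * g (c * n + c) + c

/-- `f` and `g` have equivalent asymptotic growth. -/
def AsympEquiv (f g : ℕ → ℕ) : Prop := Preceq f g ∧ Preceq g f

/-- The ball of radius `n` about a set `X` of vertices. -/
def ballSet (G : SimpleGraph V) (X : Set V) (n : ℕ) : Set V :=
  {v | ∃ u ∈ X, ∃ p : G.Walk u v, p.length ≤ n}

section Aux

variable {V : Type*}

lemma fireSet_not_mem_W {G : SimpleGraph V} {r : ℕ} {X0 : Set V} {W : ℕ → Set V}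
    (hdisj : ∀ n, Disjoint (fireSet G r X0 W n) (W (n + 1))) :
    ∀ n, ∀ v ∈ fireSet G r X0 W n, ∀ i, 1 ≤ i → i ≤ n + 1 → v ∉ W i := by
  intro n
  cases n with
  | zero =>
    intro v hv i h1 h2
    interval_cases i
    exact fun hw => (hdisj 0).ne_of_mem hv hw rfl
  | succ m =>
    intro v hv i h1 h2
    rcases Nat.lt_or_ge i (m + 2) with hi | hi
    · obtain ⟨u, hu, p, hp, hsupp⟩ := hv
      exact hsupp v p.end_mem_support i h1 (Nat.lt_succ_iff.mp hi)
    · have : i = m + 2 := le_antisymm h2 hi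
      subst this
      exact fun hw => (hdisj (m + 1)).ne_of_mem hv hw rfl

lemma fireSet_mono {G : SimpleGraph V} {r : ℕ} {X0 : Set V} {W : ℕ → Set V}
    (hdisj : ∀ n, Disjoint (fireSet G r X0 W n) (W (n + 1))) (n : ℕ) :
    fireSet G r X0 W n ⊆ fireSet G r X0 W (n + 1) := by
  intro v hv
  refine ⟨v, hv, Walk.nil, by simp, ?_⟩
  intro w hw i h1 h2
  simp only [Walk.support_nil, List.mem_singleton] at hw
  rw [hw]
  exact fireSet_not_mem_W hdisj n v hv i h1 h2

lemma fireSet_monotone {G : SimpleGraph V} {r : ℕ} {X0 : Set V} {W : ℕ → Set V}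
    (hdisj : ∀ n, Disjoint (fireSet G r X0 W n) (W (n + 1))) :
    Monotone (fireSet G r X0 W) :=
  monotone_nat_of_le_succ (fireSet_mono hdisj)

lemma fireSet_finite {G : SimpleGraph V} (hlf : LocallyFiniteGraph G) {X0 : Set V}
    (hX0 : X0.Finite) (W : ℕ → Set V) (n : ℕ) : (fireSet G 1 X0 W n).Finite := by
  induction n with
  | zero => exact hX0
  | succ m ih =>
    have hsub : fireSet G 1 X0 W (m + 1) ⊆
        ⋃ u ∈ fireSet G 1 X0 W m, insert u (G.neighborSet u) := by
      rintro v ⟨u, hu, p, hp, -⟩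
      refine Set.mem_biUnion hu ?_
      interval_cases h : p.length
      · rw [Walk.eq_of_length_eq_zero h]; exact Set.mem_insert _ _
      · exact Set.mem_insert_of_mem _ (Walk.adj_of_length_eq_one h)
    exact (ih.biUnion (fun u _ => (hlf u).insert u)).subset hsub

lemma stabilizes {S : ℕ → Set V} (hmono : Monotone S) {F : Set V} (hF : F.Finite)
    (hsub : ∀ n, S n ⊆ F) : ∃ N, 0 < N ∧ ∀ n, N ≤ n → S n = S N := by
  have hU : (⋃ n, S n).Finite := hF.subset (Set.iUnion_subset hsub)
  have hex : ∀ x ∈ hU.toFinset, ∃ n, x ∈ S n := by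
    intro x hx
    simpa using hU.mem_toFinset.mp hx
  choose g hg using hex
  set N := hU.toFinset.attach.sup fun x => g x.1 x.2 with hN
  have hUN : (⋃ n, S n) ⊆ S N := by
    intro x hx
    have hx' : x ∈ hU.toFinset := hU.mem_toFinset.mpr hx
    exact hmono (Finset.le_sup (f := fun x : {x // x ∈ hU.toFinset} => g x.1 x.2)
      (Finset.mem_attach _ ⟨x, hx'⟩)) (hg x hx')
  refine ⟨N + 1, Nat.succ_pos _, fun n hn => ?_⟩
  have h1 : S (N + 1) = S N :=
    le_antisymm ((Set.subset_iUnion S (N + 1)).trans hUN) (hmono (Nat.le_succ N))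
  rw [h1]
  exact le_antisymm ((Set.subset_iUnion S n).trans hUN) (hmono (Nat.le_of_succ_le hn))

end Aux

/-- containment properties are inherited by subgraphs of locally finite graphs. -/
theorem stmt9 {V : Type*} (H : SimpleGraph V) (hlf : LocallyFiniteGraph H) (f : ℕ → ℕ)
    (hH : HasContainmentProperty H 1 f) (G : H.Subgraph) :
    HasContainmentProperty G.coe 1 f := by
  intro X0' hX0'
  set X0 : Set V := Subtype.val '' X0' with hX0def
  obtain ⟨W, hWcard, hWdisj, N0, hN0pos, hN0⟩ := hH X0 (hX0'.image _)
  set W' : ℕ → Set G.verts := fun i => Subtype.val ⁻¹' W i with hW'def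
  -- key inclusion
  have key : ∀ n, ∀ v ∈ fireSet G.coe 1 X0' W' n, (v : V) ∈ fireSet H 1 X0 W n := by
    intro n
    induction n with
    | zero => intro v hv; exact ⟨v, hv, rfl⟩
    | succ m ih =>
      rintro v ⟨u, hu, p, hp, hsupp⟩
      refine ⟨u, ih u hu, p.map G.hom, (Walk.length_map _ _).trans_le hp, ?_⟩
      intro w hw i h1 h2
      replace hw : w ∈ (p.map G.hom).support := hw
      rw [Walk.support_map, List.mem_map] at hw
      obtain ⟨w', hw', rfl⟩ := hw
      exact hsupp w' hw' i h1 h2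
  have hdisj' : ∀ n, Disjoint (fireSet G.coe 1 X0' W' n) (W' (n + 1)) := by
    intro n
    rw [Set.disjoint_left]
    intro v hv hv'
    exact (hWdisj n).ne_of_mem (key n v hv) hv' rfl
  -- bound all fire sets in a fixed finite set
  have hTmono : Monotone (fireSet H 1 X0 W) := fireSet_monotone hWdisj
  have hTsub : ∀ n, fireSet H 1 X0 W n ⊆ fireSet H 1 X0 W N0 := by
    intro n
    rcases le_or_gt n N0 with h | h
    · exact hTmono h
    · exact le_of_eq (hN0 n h.le)
  have hF : (Subtype.val ⁻¹' fireSet H 1 X0 W N0 : Set G.verts).Finite :=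
    (fireSet_finite hlf (hX0'.image _) W N0).preimage
      (Set.injOn_of_injective Subtype.val_injective)
  have hsub : ∀ n, fireSet G.coe 1 X0' W' n ⊆ Subtype.val ⁻¹' fireSet H 1 X0 W N0 :=
    fun n v hv => hTsub n (key n v hv)
  obtain ⟨N, hNpos, hNstab⟩ := stabilizes (fireSet_monotone hdisj') hF hsub
  refine ⟨W', ⟨?_, hdisj', N, hNpos, hNstab⟩⟩
  intro n hn
  have h1 := (hWcard n hn).1
  refine ⟨h1.preimage (Set.injOn_of_injective Subtype.val_injective), ?_⟩
  calc (W' n).ncard = (Subtype.val '' W' n).ncard :=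
        (Set.ncard_image_of_injective _ Subtype.val_injective).symm
    _ ≤ (W n).ncard := Set.ncard_le_ncard (Set.image_preimage_subset _ _) h1
    _ ≤ f n := (hWcard n hn).2

end Firefighter
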